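/- Let U be a nonnegative real random variable that is stochastically lower bounded by a uniform variable on [0,1], i.e., for all t ∈ [0,1], P(U ≤ t) ≤ t. Let g : ℝ≥0 → ℝ≥0 be a nonincreasing function and set V = g(U). Then for every c > 0, E[ 1_{U ≤ c·g(U)} / g(U) ] ≤ c (with the convention that the integrand is 0 outside the indicator set). -/

import Mathlib

open MeasureTheory ENNReal Set

/-- Part (i) of Lemma 3.2: if `U` is stochastically lower bounded by a uniform
variable on `[0,1]` and `g` is nonnegative nonincreasing, then for `V = g(U)`,
`E[1_{U ≤ c g(U)} / g(U)] ≤ c` for every `c > 0`. -/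
theorem dependency_control_monotone_function
    {Ω : Type*} [MeasurableSpace Ω] (P : Measure Ω) [IsProbabilityMeasure P]
    (U : Ω → ℝ) (hU : Measurable U) (hUpos : ∀ ω, 0 ≤ U ω)
    (hUnif : ∀ t : ℝ, 0 ≤ t → t ≤ 1 → P {ω | U ω ≤ t} ≤ ENNReal.ofReal t)
    (g : ℝ → ℝ) (hg : ∀ x, 0 ≤ g x) (hmono : AntitoneOn g (Set.Ici 0))
    (c : ℝ) (hc : 0 < c) :
    ∫⁻ ω in {ω | U ω ≤ c * g (U ω) ∧ 0 < g (U ω)}, ENNReal.ofReal (g (U ω))⁻¹ ∂P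
      ≤ ENNReal.ofReal c := by
  set E : Set Ω := {ω | U ω ≤ c * g (U ω) ∧ 0 < g (U ω)} with hEdef
  -- measurability of g ∘ U via an antitone extension
  have hanti : Antitone fun x : ℝ => g (max x 0) := fun x y hxy =>
    hmono (le_max_right x 0) (le_max_right y 0) (max_le_max hxy le_rfl)
  have hGmeas : Measurable fun ω => g (U ω) := by
    have h1 : Measurable fun ω => g (max (U ω) 0) := hanti.measurable.comp hU
    have : (fun ω => g (U ω)) = fun ω => g (max (U ω) 0) := by
      funext ω; rw [max_eq_left (hUpos ω)]
    rw [this]; exact h1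
  have hE : MeasurableSet E := by
    apply MeasurableSet.inter
    · exact measurableSet_le hU (measurable_const.mul hGmeas)
    · exact measurableSet_lt measurable_const hGmeas
  set S : Set ℝ := {u : ℝ | 0 ≤ u ∧ u ≤ c * g u} with hSdef
  by_cases hS : ∃ u ∈ S, 0 < u
  · obtain ⟨u₀, ⟨hu₀0, hu₀le⟩, hu₀pos⟩ := hS
    have hSne : S.Nonempty := ⟨u₀, hu₀0, hu₀le⟩
    have hSbdd : BddAbove S := by
      refine ⟨max u₀ (c * g u₀), fun u hu => ?_⟩
      obtain ⟨hu0, hule⟩ := hu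
      rcases le_total u u₀ with h | h
      · exact le_trans h (le_max_left _ _)
      · have : g u ≤ g u₀ := hmono hu₀0 hu0 h
        calc u ≤ c * g u := hule
          _ ≤ c * g u₀ := mul_le_mul_of_nonneg_left this hc.le
          _ ≤ max u₀ (c * g u₀) := le_max_right _ _
    set t : ℝ := sSup S with htdef
    have htpos : 0 < t := lt_of_lt_of_le hu₀pos (le_csSup hSbdd ⟨hu₀0, hu₀le⟩)
    -- on E, t ≤ c * g(U ω)
    have hkey : ∀ ω ∈ E, t ≤ c * g (U ω) := by
      intro ω hω
      obtain ⟨h1, _⟩ := hω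
      refine csSup_le hSne fun u hu => ?_
      obtain ⟨hu0, hule⟩ := hu
      rcases le_total u (U ω) with h | h
      · exact le_trans h h1
      · have : g u ≤ g (U ω) := by
          by_cases hgg : U ω = u
          · rw [hgg]
          · exact hmono (hUpos ω) hu0 h
        calc u ≤ c * g u := hule
          _ ≤ c * g (U ω) := mul_le_mul_of_nonneg_left this hc.le
    have hsub : E ⊆ {ω | U ω ≤ t} := by
      intro ω hω
      obtain ⟨h1, _⟩ := hω
      exact le_csSup hSbdd ⟨hUpos ω, h1⟩
    have hbound : ∀ ω ∈ E, ENNReal.ofReal (g (U ω))⁻¹ ≤ ENNReal.ofReal (c / t) := by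
      intro ω hω
      apply ENNReal.ofReal_le_ofReal
      rw [div_eq_mul_inv]
      have ht' : t / c ≤ g (U ω) := by
        rw [div_le_iff₀ hc]; linarith [hkey ω hω]
      have htc : 0 < t / c := div_pos htpos hc
      calc (g (U ω))⁻¹ ≤ (t / c)⁻¹ := by
            apply inv_anti₀ htc ht'
        _ = c * t⁻¹ := by rw [div_eq_mul_inv, mul_inv, inv_inv, mul_comm]
    calc ∫⁻ ω in E, ENNReal.ofReal (g (U ω))⁻¹ ∂P
        ≤ ∫⁻ _ in E, ENNReal.ofReal (c / t) ∂P :=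
          setLIntegral_mono' hE hbound
      _ = ENNReal.ofReal (c / t) * P E := by
          rw [setLIntegral_const]
      _ ≤ ENNReal.ofReal (c / t) * P {ω | U ω ≤ t} :=
          mul_le_mul_right (measure_mono hsub) _
      _ ≤ ENNReal.ofReal c := by
          rcases le_total t 1 with ht1 | ht1
          · calc ENNReal.ofReal (c / t) * P {ω | U ω ≤ t}
                ≤ ENNReal.ofReal (c / t) * ENNReal.ofReal t :=
                  mul_le_mul_right (hUnif t htpos.le ht1) _
              _ = ENNReal.ofReal (c / t * t) := by
                  rw [ENNReal.ofReal_mul (by positivity)]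
              _ = ENNReal.ofReal c := by rw [div_mul_cancel₀ _ htpos.ne']
          · calc ENNReal.ofReal (c / t) * P {ω | U ω ≤ t}
                ≤ ENNReal.ofReal (c / t) * 1 :=
                  mul_le_mul_right prob_le_one _
              _ = ENNReal.ofReal (c / t) := by rw [mul_one]
              _ ≤ ENNReal.ofReal c :=
                  ENNReal.ofReal_le_ofReal (div_le_self hc.le ht1)
  · push_neg at hS
    have hsub : E ⊆ {ω | U ω ≤ 0} := by
      intro ω hω
      exact hS (U ω) ⟨hUpos ω, hω.1⟩
    have hnull : P E = 0 := by
      apply measure_mono_null hsub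
      have := hUnif 0 le_rfl zero_le_one
      simpa using this
    rw [setLIntegral_measure_zero _ _ hnull]
    exact zero_le
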